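/- For every integer k ≥ 14, 2(k − 1 − π(k)) > k − 1, where π(k) is the number of primes up to k. -/
import Mathlib

theorem stmt_18 (k : ℕ) (hk : 14 ≤ k) :
    k - 1 < 2 * (k - 1 - Nat.primeCounting k) := by
  rcases le_or_gt 33 k with h | h
  · have hb := Nat.primeCounting'_add_le (a := 6) (k := 34) (by norm_num) (by norm_num) (k - 33)
    have h33 : Nat.primeCounting' 34 = 11 := by
      rw [Nat.primeCounting', Nat.count_eq_card_filter_range]; decide
    have heq : Nat.primeCounting k = Nat.primeCounting' (34 + (k - 33)) := by
      rw [Nat.primeCounting]; congr 1; omega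
    have ht : Nat.totient 6 = 2 := by decide
    rw [h33, ht] at hb
    have hd : (k - 33) / 6 * 6 ≤ k - 33 := Nat.div_mul_le_self _ 6
    rw [heq]
    omega
  · interval_cases k <;>
      (rw [Nat.primeCounting, Nat.primeCounting', Nat.count_eq_card_filter_range]; decide)
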